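/- Let (X,T) be a non-trivial weakly mixing system. Then for every n ≥ 2, (X,T) is broken F_inf-n-sensitive. -/
import Mathlib


open Filter Topology MeasureTheory

variable {X : Type} [MetricSpace X]

def orbit (T : X → X) (x : X) : Set X := Set.range fun n : ℕ => T^[n] x

def IsTransitiveSys (T : X → X) : Prop :=
  ∀ U V : Set X, IsOpen U → U.Nonempty → IsOpen V → V.Nonempty →
    {n : ℕ | (U ∩ T^[n] ⁻¹' V).Nonempty}.Infinite

def MinimalPoint (T : X → X) (x : X) : Prop :=
  ∀ y ∈ closure (orbit T x), x ∈ closure (orbit T y)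

def MinimalSys (T : X → X) : Prop := ∀ x : X, Dense (orbit T x)

def IsMinimalSubset (T : X → X) (M : Set X) : Prop :=
  M.Nonempty ∧ IsClosed M ∧ Set.MapsTo T M M ∧
    ∀ M' ⊆ M, M'.Nonempty → IsClosed M' → Set.MapsTo T M' M' → M' = M

noncomputable def ubd (F : Set ℕ) : ℝ :=
  Filter.limsup (fun N : ℕ => ⨆ m : ℕ, ((F ∩ Set.Ico m (m + N)).ncard : ℝ) / N) atTop

noncomputable def lbd (F : Set ℕ) : ℝ :=
  Filter.liminf (fun N : ℕ => ⨅ m : ℕ, ((F ∩ Set.Ico m (m + N)).ncard : ℝ) / N) atTop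

def Syndetic (F : Set ℕ) : Prop := ∃ N : ℕ, ∀ k : ℕ, ∃ j ∈ F, k ≤ j ∧ j ≤ k + N

def Thick (F : Set ℕ) : Prop := ∀ l : ℕ, ∃ m : ℕ, Set.Icc m (m + l) ⊆ F

def PiecewiseSyndetic (F : Set ℕ) : Prop := ∃ A B : Set ℕ, Thick A ∧ Syndetic B ∧ F = A ∩ B

def Fps : Set (Set ℕ) := {F | PiecewiseSyndetic F}
def Fpubd : Set (Set ℕ) := {F | 0 < ubd F}
def Finf : Set (Set ℕ) := {F | F.Infinite}

def FursFamily (S : Set (Set ℕ)) : Prop := ∀ F₁ F₂ : Set ℕ, F₁ ⊆ F₂ → F₁ ∈ S → F₂ ∈ S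

def FamRecurrent {Z : Type} [MetricSpace Z] (S : Set (Set ℕ)) (T : Z → Z) (x : Z) : Prop :=
  ∀ U : Set Z, IsOpen U → x ∈ U → {n : ℕ | T^[n] x ∈ U} ∈ S

def BrokenSensitive (T : X → X) (S : Set (Set ℕ)) (n : ℕ) : Prop :=
  ∃ δ > (0:ℝ), ∃ F₀ ∈ S, ∀ U : Set X, IsOpen U → U.Nonempty → ∀ l : ℕ,
    ∃ x : Fin n → X, (∀ i, x i ∈ U) ∧ ∃ m : ℕ,
      ∀ k ∈ F₀ ∩ Set.Icc 1 l, ∀ i j : Fin n, i ≠ j →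
        δ < dist (T^[m + k] (x i)) (T^[m + k] (x j))

def SensitiveTuple (T : X → X) {n : ℕ} (x : Fin n → X) : Prop :=
  ∀ U : Set X, IsOpen U → U.Nonempty →
    ∀ V : Fin n → Set X, (∀ i, IsOpen (V i) ∧ x i ∈ V i) →
      ∃ y : Fin n → X, (∀ i, y i ∈ U) ∧ ∃ m : ℕ, ∀ i, T^[m] (y i) ∈ V i

def EssentialSensitiveTuple (T : X → X) {n : ℕ} (x : Fin n → X) : Prop :=
  Function.Injective x ∧ SensitiveTuple T x

def prodMap (T : X → X) (n : ℕ) : (Fin n → X) → Fin n → X := fun x i => T (x i)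

def BlockilyThickly (T : X → X) (n : ℕ) : Prop :=
  ∃ δ > (0:ℝ), ∀ k : ℕ, ∀ U : Set X, IsOpen U → U.Nonempty →
    ∃ x : Fin n → X, (∀ i, x i ∈ U) ∧ ∃ m : ℕ, ∀ l ≤ k, ∀ i j : Fin n, i ≠ j →
      δ < dist (T^[m + l] (x i)) (T^[m + l] (x j))

def WeaklyMixing (T : X → X) : Prop :=
  IsTransitiveSys (fun p : X × X => (T p.1, T p.2))

def TopologicallyErgodic (T : X → X) : Prop :=
  ∀ U V : Set X, IsOpen U → U.Nonempty → IsOpen V → V.Nonempty →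
    Syndetic {m : ℕ | (T^[m] ⁻¹' U ∩ V).Nonempty}

def MeanEquicontinuous (T : X → X) : Prop :=
  ∀ ε > (0:ℝ), ∃ δ > (0:ℝ), ∀ x y : X, dist x y < δ →
    Filter.limsup (fun m : ℕ => (∑ k ∈ Finset.range m, dist (T^[k] x) (T^[k] y)) / m) atTop < ε

def BanachProximal (T : X → X) (x y : X) : Prop :=
  ∀ ε > (0:ℝ), ubd {m : ℕ | ε ≤ dist (T^[m] x) (T^[m] y)} = 0

def EquicontinuousSys (T : X → X) : Prop :=
  ∀ ε > (0:ℝ), ∃ δ > (0:ℝ), ∀ x y : X, dist x y < δ → ∀ n : ℕ, dist (T^[n] x) (T^[n] y) < ε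

noncomputable def measSupp {Z : Type} [MetricSpace Z] [MeasurableSpace Z] (T : Z → Z) : Set Z :=
  closure (⋃ μ ∈ {μ : Measure Z | IsProbabilityMeasure μ ∧
      ∀ s : Set Z, MeasurableSet s → μ (T ⁻¹' s) = μ s},
    {x : Z | ∀ U : Set Z, IsOpen U → x ∈ U → 0 < μ U})
lemma iter_prod (T : X → X) (m : ℕ) (p : X × X) :
    (fun p : X × X => (T p.1, T p.2))^[m] p = (T^[m] p.1, T^[m] p.2) := by
  induction m generalizing p with
  | zero => simp
  | succ m ih =>
      rw [Function.iterate_succ_apply, Function.iterate_succ_apply,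
        Function.iterate_succ_apply, ih]

lemma wm_pair (T : X → X) (hwm : WeaklyMixing T)
    (U1 V1 U2 V2 : Set X) (hU1 : IsOpen U1) (hU1n : U1.Nonempty)
    (hV1 : IsOpen V1) (hV1n : V1.Nonempty)
    (hU2 : IsOpen U2) (hU2n : U2.Nonempty) (hV2 : IsOpen V2) (hV2n : V2.Nonempty) :
    {m : ℕ | (U1 ∩ T^[m] ⁻¹' U2).Nonempty ∧ (V1 ∩ T^[m] ⁻¹' V2).Nonempty}.Infinite := by
  have h := hwm (U1 ×ˢ V1) (U2 ×ˢ V2) (hU1.prod hV1) (hU1n.prod hV1n)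
    (hU2.prod hV2) (hU2n.prod hV2n)
  refine h.mono ?_
  rintro m ⟨p, ⟨hp1, hp2⟩, hp3⟩
  rw [Set.mem_preimage, iter_prod] at hp3
  exact ⟨⟨p.1, hp1, hp3.1⟩, ⟨p.2, hp2, hp3.2⟩⟩

lemma furs_combine (T : X → X) (hT : Continuous T) (hwm : WeaklyMixing T) (hne : Nonempty X) :
    ∀ (r : ℕ) (U V : Fin r → Set X), (∀ i, IsOpen (U i)) → (∀ i, (U i).Nonempty) →
    (∀ i, IsOpen (V i)) → (∀ i, (V i).Nonempty) →
    ∃ U' V' : Set X, IsOpen U' ∧ U'.Nonempty ∧ IsOpen V' ∧ V'.Nonempty ∧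
      ∀ k, (U' ∩ T^[k] ⁻¹' V').Nonempty → ∀ i, (U i ∩ T^[k] ⁻¹' (V i)).Nonempty := by
  intro r
  induction r with
  | zero =>
      intro U V _ _ _ _
      exact ⟨Set.univ, Set.univ, isOpen_univ, Set.univ_nonempty, isOpen_univ,
        Set.univ_nonempty, fun k _ i => i.elim0⟩
  | succ r ih =>
      intro U V hUo hUn hVo hVn
      obtain ⟨U', V', h1, h2, h3, h4, hN⟩ :=
        ih (fun i => U i.castSucc) (fun i => V i.castSucc)
          (fun i => hUo _) (fun i => hUn _) (fun i => hVo _) (fun i => hVn _)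
      obtain ⟨m, hm1, hm2⟩ := (wm_pair T hwm U' V' (U (Fin.last r)) (V (Fin.last r))
        h1 h2 h3 h4 (hUo _) (hUn _) (hVo _) (hVn _)).nonempty
      refine ⟨U' ∩ T^[m] ⁻¹' (U (Fin.last r)), V' ∩ T^[m] ⁻¹' (V (Fin.last r)),
        h1.inter ((hUo _).preimage (hT.iterate m)), hm1,
        h3.inter ((hVo _).preimage (hT.iterate m)), hm2, ?_⟩
      rintro k ⟨z, ⟨hz1, hz2⟩, hz3'⟩
      obtain ⟨hz3, hz4⟩ := hz3'
      intro i
      refine Fin.lastCases ?_ ?_ i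
      · refine ⟨T^[m] z, hz2, ?_⟩
        rw [Set.mem_preimage, ← Function.iterate_add_apply, add_comm,
          Function.iterate_add_apply]
        exact hz4
      · intro j
        exact hN k ⟨z, ⟨hz1, hz3⟩⟩ j

lemma fursN (T : X → X) (hT : Continuous T) (hwm : WeaklyMixing T) (hne : Nonempty X)
    (r : ℕ) (U V : Fin r → Set X) (hUo : ∀ i, IsOpen (U i)) (hUn : ∀ i, (U i).Nonempty)
    (hVo : ∀ i, IsOpen (V i)) (hVn : ∀ i, (V i).Nonempty) (b : ℕ) :
    ∃ k, b < k ∧ ∀ i, (U i ∩ T^[k] ⁻¹' (V i)).Nonempty := by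
  obtain ⟨U', V', h1, h2, h3, h4, hN⟩ := furs_combine T hT hwm hne r U V hUo hUn hVo hVn
  have hinf : {m : ℕ | (U' ∩ T^[m] ⁻¹' V').Nonempty}.Infinite := by
    refine (wm_pair T hwm U' U' V' V' h1 h2 h1 h2 h3 h4 h3 h4).mono ?_
    rintro m ⟨hm, -⟩
    exact hm
  obtain ⟨k, hk1, hk2⟩ := hinf.exists_gt b
  exact ⟨k, hk2, hN k hk1⟩

lemma wm_infinite (T : X → X) (hwm : WeaklyMixing T) (hnt : ∃ a b : X, a ≠ b) :
    Infinite X := by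
  obtain ⟨a, b, hab⟩ := hnt
  by_contra h
  have hfin : Finite X := not_infinite_iff_finite.mp h
  have : DiscreteTopology X := Finite.instDiscreteTopology
  obtain ⟨m, hm⟩ := (hwm ({a} ×ˢ {a}) ({a} ×ˢ {b}) (isOpen_discrete _)
    ⟨(a, a), by simp⟩ (isOpen_discrete _) ⟨(a, b), by simp⟩).nonempty
  obtain ⟨q, hq1, hq2⟩ := hm
  rw [Set.mem_preimage, iter_prod] at hq2
  obtain ⟨hq11, hq12⟩ := hq1
  simp only [Set.mem_singleton_iff] at hq11 hq12
  obtain ⟨hq21, hq22⟩ := hq2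
  simp only [Set.mem_singleton_iff] at hq21 hq22
  apply hab
  rw [← hq21, hq11, ← hq12, hq22]

theorem stmt11 [CompactSpace X] (T : X → X) (hT : Continuous T) (hTs : Function.Surjective T)
    (hwm : WeaklyMixing T) (hnt : ∃ a b : X, a ≠ b) (n : ℕ) (hn : 2 ≤ n) :
    BrokenSensitive T Finf n := by
  have hne : Nonempty X := ⟨hnt.choose⟩
  have hXinf : Infinite X := wm_infinite T hwm hnt
  -- n distinct points
  set e := Infinite.natEmbedding X with he
  set p : Fin n → X := fun i => e i.val with hp
  have hpinj : Function.Injective p := fun i j hij => Fin.val_injective (e.injective hij)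
  -- minimum pairwise distance
  obtain ⟨c, hc0, hc⟩ : ∃ c > (0:ℝ), ∀ i j : Fin n, i ≠ j → c ≤ dist (p i) (p j) := by
    classical
    set s : Finset ℝ := Finset.image (fun ij : Fin n × Fin n => dist (p ij.1) (p ij.2))
      (Finset.univ.filter (fun ij : Fin n × Fin n => ij.1 ≠ ij.2)) with hs
    have hi0 : (⟨0, by omega⟩ : Fin n) ≠ ⟨1, by omega⟩ := by
      intro h; simpa using congrArg Fin.val h
    have hsne : s.Nonempty := ⟨dist (p ⟨0, by omega⟩) (p ⟨1, by omega⟩),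
      Finset.mem_image.mpr ⟨(⟨0, by omega⟩, ⟨1, by omega⟩), by simpa using hi0, rfl⟩⟩
    refine ⟨s.min' hsne, ?_, ?_⟩
    · obtain ⟨ij, hij, hval⟩ := Finset.mem_image.mp (s.min'_mem hsne)
      rw [← hval]
      have : ij.1 ≠ ij.2 := by simpa using hij
      exact dist_pos.mpr fun h => this (hpinj h)
    · intro i j hij
      exact s.min'_le _ (Finset.mem_image.mpr ⟨(i, j), by simpa using hij, rfl⟩)
  set B : Fin n → Set X := fun i => Metric.ball (p i) (c / 4) with hB
  have hBo : ∀ i, IsOpen (B i) := fun i => Metric.isOpen_ball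
  have hBn : ∀ i, (B i).Nonempty := fun i => ⟨p i, by simp [hB]; positivity⟩
  -- recursive construction of nested open sets and times
  set St := {s : ℕ × (Fin n → Set X) // ∀ i, IsOpen (s.2 i) ∧ (s.2 i).Nonempty} with hSt
  have step : ∀ s : St, ∃ k, s.1.1 < k ∧ ∀ i, (s.1.2 i ∩ T^[k] ⁻¹' (B i)).Nonempty :=
    fun s => fursN T hT hwm hne n (fun i => s.1.2 i) B (fun i => (s.2 i).1)
      (fun i => (s.2 i).2) hBo hBn s.1.1
  choose kf hkf1 hkf2 using step
  set f : St → St := fun s => ⟨(kf s, fun i => s.1.2 i ∩ T^[kf s] ⁻¹' (B i)),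
    fun i => ⟨(s.2 i).1.inter ((hBo i).preimage (hT.iterate _)), hkf2 s i⟩⟩ with hf
  set s0 : St := ⟨(0, B), fun i => ⟨hBo i, hBn i⟩⟩ with hs0
  set seq : ℕ → St := fun j => f^[j] s0 with hseq
  have hseqsucc : ∀ j, seq (j + 1) = f (seq j) := fun j => by
    simp only [hseq, Function.iterate_succ_apply']
  set K : ℕ → ℕ := fun j => (seq j).1.1 with hK
  set G : ℕ → Fin n → Set X := fun j i => (seq j).1.2 i with hG
  have hKmono : StrictMono K := by
    apply strictMono_nat_of_lt_succ
    intro j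
    have := hkf1 (seq j)
    simp only [hK, hseqsucc j, hf]
    exact this
  have hKge : ∀ j, j ≤ K j := fun j => hKmono.le_apply
  have hGsub : ∀ j i, G (j + 1) i ⊆ G j i := by
    intro j i
    simp only [hG, hseqsucc j, hf]
    exact Set.inter_subset_left
  have hGmono : ∀ j l i, j ≤ l → G l i ⊆ G j i := by
    intro j l i hjl
    induction l with
    | zero => simp_all
    | succ l ih =>
        rcases Nat.lt_or_ge j (l + 1) with h | h
        · exact (hGsub l i).trans (ih (by omega))
        · have : j = l + 1 := by omega
          subst this; rfl
  have hGball : ∀ j i, G (j + 1) i ⊆ T^[K (j + 1)] ⁻¹' (B i) := by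
    intro j i
    simp only [hG, hK, hseqsucc j, hf]
    exact Set.inter_subset_right
  -- the final data
  refine ⟨c / 4, by positivity, Set.range (fun j : ℕ => K (j + 1)), ?_, ?_⟩
  · exact Set.infinite_range_of_injective fun a b hab =>
      Nat.succ_injective (hKmono.injective hab)
  intro U hUo hUn l
  obtain ⟨m, -, hm⟩ := fursN T hT hwm hne n (fun _ => U) (fun i => G l i)
    (fun _ => hUo) (fun _ => hUn) (fun i => ((seq l).2 i).1) (fun i => ((seq l).2 i).2) 0
  choose y hy1 hy2 using fun i => hm i
  refine ⟨y, hy1, m, ?_⟩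
  rintro k ⟨⟨j, rfl⟩, hk1, hkl⟩ i i' hii'
  have hjl : j + 1 ≤ l := le_trans (hKge (j + 1)) hkl
  have hyB : ∀ i'', dist (T^[m + K (j + 1)] (y i'')) (p i'') < c / 4 := by
    intro i''
    have h1 : T^[m] (y i'') ∈ G (j + 1) i'' := hGmono (j + 1) l i'' hjl (hy2 i'')
    have h2 := hGball j i'' h1
    rw [Set.mem_preimage] at h2
    have heq : T^[m + K (j + 1)] (y i'') = T^[K (j + 1)] (T^[m] (y i'')) := by
      rw [add_comm, Function.iterate_add_apply]
    rw [heq]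
    simpa [hB, Metric.mem_ball] using h2
  have htri := dist_triangle4 (p i) (T^[m + K (j + 1)] (y i)) (T^[m + K (j + 1)] (y i')) (p i')
  have h1 := hyB i
  have h2 := hyB i'
  have h3 := hc i i' hii'
  rw [dist_comm] at h1
  linarith [dist_comm (T^[m + K (j + 1)] (y i')) (p i') ▸ h2]
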